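/- A positive definite matrix A ∈ B(ℂ^d) is the Cesàro asymptotic limit of a power bounded matrix of class C₁₁ (equivalently, one similar to a unitary) if and only if the eigenvalues t₁,…,t_d > 0 of A (with multiplicity) satisfy 1/t₁ + ⋯ + 1/t_d = d, equivalently tr(A^{-1}) = d. -/

import Mathlib

set_option maxHeartbeats 2000000

open Filter Topology
open scoped ComplexOrder
open Finset Matrix
open scoped ComplexConjugate
open Fin.NatCast

lemma window_sum (d : ℕ) (h : ℕ → ℂ) (hp : ∀ k, h (k + d) = h k) (m : ℕ) :
    ∑ k ∈ range d, h (m + k) = ∑ k ∈ range d, h k := by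
  induction m with
  | zero => simp
  | succ m ih =>
    have h1 : ∑ k ∈ range (d+1), h (m+k) = ∑ k ∈ range d, h (m+k) + h (m+d) :=
      Finset.sum_range_succ _ d
    have h2 : ∑ k ∈ range (d+1), h (m+k) = (∑ k ∈ range d, h (m+(k+1))) + h (m+0) :=
      Finset.sum_range_succ' _ d
    have h3 : ∑ k ∈ range d, h (m+1+k) = ∑ k ∈ range d, h (m+(k+1)) := by
      apply Finset.sum_congr rfl; intro k _; ring_nf
    have h5 : ∑ k ∈ range d, h (m + k) + h m = ∑ k ∈ range d, h (m + (k + 1)) + h m := by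
      have := h1.symm.trans h2
      simp only [add_zero] at this
      rwa [hp m] at this
    rw [h3, ← add_right_cancel h5, ih]

lemma cesaro_periodic {d : ℕ} (hd : 0 < d) (h : ℕ → ℂ) (hp : ∀ k, h (k + d) = h k) :
    Tendsto (fun n : ℕ => (n:ℂ)⁻¹ * ∑ k ∈ range n, h k) atTop
      (𝓝 ((∑ k ∈ range d, h k) / d)) := by
  set c : ℂ := (∑ k ∈ range d, h k) / d with hc
  have hdc : (d:ℂ) ≠ 0 := Nat.cast_ne_zero.mpr hd.ne'
  set G : ℕ → ℂ := fun n => ∑ k ∈ range n, h k - n * c with hG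
  have hGper : ∀ n, G (n + d) = G n := by
    intro n
    have : ∑ k ∈ range (n + d), h k = ∑ k ∈ range n, h k + ∑ k ∈ range d, h (n + k) :=
      Finset.sum_range_add h n d
    simp only [hG, this, window_sum d h hp n]
    have : ∑ k ∈ range d, h k = d * c := by
      rw [hc, mul_div_assoc']; exact (mul_div_cancel_left₀ _ hdc).symm
    rw [this]; push_cast; ring
  have hGmod : ∀ n, G n = G (n % d) := by
    intro n
    induction n using Nat.strong_induction_on with
    | _ n ih =>
      rcases lt_or_ge n d with hlt | hle
      · rw [Nat.mod_eq_of_lt hlt]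
      · have e : n = (n - d) + d := (Nat.sub_add_cancel hle).symm
        rw [Nat.mod_eq_sub_mod hle, ← ih (n - d) (by omega)]
        conv_lhs => rw [e]
        exact hGper _
  set B : ℝ := ∑ r ∈ range d, ‖G r‖ with hB
  have hGbd : ∀ n, ‖G n‖ ≤ B := by
    intro n
    rw [hGmod n]
    exact Finset.single_le_sum (f := fun r => ‖G r‖)
      (fun r _ => norm_nonneg _) (Finset.mem_range.mpr (Nat.mod_lt n hd))
  have h0 : Tendsto (fun n : ℕ => (n:ℂ)⁻¹ * G n) atTop (𝓝 0) := by
    have hbd : ∀ n : ℕ, ‖(n:ℂ)⁻¹ * G n‖ ≤ B / n := by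
      intro n
      rcases Nat.eq_zero_or_pos n with rfl | hn
      · simp
      · rw [norm_mul]
        have h1 : ‖(n:ℂ)⁻¹‖ = (n:ℝ)⁻¹ := by simp
        rw [h1, div_eq_inv_mul]
        exact mul_le_mul_of_nonneg_left (hGbd n) (inv_nonneg.2 (Nat.cast_nonneg n))
    exact squeeze_zero_norm hbd (tendsto_const_div_atTop_nhds_zero_nat B)
  have heq : ∀ᶠ n : ℕ in atTop, c + (n:ℂ)⁻¹ * G n = (n:ℂ)⁻¹ * ∑ k ∈ range n, h k := by
    filter_upwards [eventually_ge_atTop 1] with n hn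
    have hnc : (n:ℂ) ≠ 0 := Nat.cast_ne_zero.mpr (by omega)
    field_simp [hG]
    ring
  have := (tendsto_const_nhds (x := c)).add h0
  rw [add_zero] at this
  exact Tendsto.congr' heq this

noncomputable def nMat {d : ℕ} [NeZero d] (u c : Fin d → ℂ) (m : ℕ) :
    Matrix (Fin d) (Fin d) ℂ :=
  Matrix.of fun a b => if b = a + (m : Fin d) then u a * c b else 0

variable {d : ℕ} [NeZero d] (u c : Fin d → ℂ)

lemma nMat_zero (huc : ∀ b, u b * c b = 1) : nMat u c 0 = 1 := by
  ext a b
  simp only [nMat, of_apply, Nat.cast_zero, add_zero, Matrix.one_apply]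
  rcases eq_or_ne b a with rfl | hne
  · simp [huc]
  · simp [hne, Ne.symm hne]

lemma nMat_mul (hcu : ∀ b, c b * u b = 1) (m : ℕ) :
    nMat u c m * nMat u c 1 = nMat u c (m + 1) := by
  ext a b
  simp only [nMat, Matrix.mul_apply, of_apply, ite_mul, zero_mul, Nat.cast_one,
    Finset.sum_ite_eq' Finset.univ (a + (m : Fin d))]
  simp only [Finset.mem_univ, if_true]
  have hcast : ((m + 1 : ℕ) : Fin d) = (m : Fin d) + 1 := by push_cast; ring
  rcases eq_or_ne b (a + (m : Fin d) + 1) with rfl | hne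
  · rw [if_pos rfl, if_pos (by rw [hcast, add_assoc])]
    have h := hcu (a + (m : Fin d))
    calc u a * c (a + (m:Fin d)) * (u (a + (m:Fin d)) * c (a + (m:Fin d) + 1))
        = u a * (c (a + (m:Fin d)) * u (a + (m:Fin d))) * c (a + (m:Fin d) + 1) := by ring
      _ = u a * c (a + (m:Fin d) + 1) := by rw [h, mul_one]
  · rw [if_neg hne, if_neg (by rw [hcast, ← add_assoc]; exact hne)]
    simp

lemma nMat_pow (huc : ∀ b, u b * c b = 1) (hcu : ∀ b, c b * u b = 1)
    (T : Matrix (Fin d) (Fin d) ℂ) (W : Matrix (Fin d) (Fin d) ℂ)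
    (hW : W * Wᴴ = 1) (hW' : Wᴴ * W = 1)
    (hT : T = W * nMat u c 1 * Wᴴ) (m : ℕ) :
    T ^ m = W * nMat u c m * Wᴴ := by
  induction m with
  | zero => simp [nMat_zero u c huc, hW]
  | succ m ih =>
    rw [pow_succ, ih, hT]
    calc W * nMat u c m * Wᴴ * (W * nMat u c 1 * Wᴴ)
        = W * (nMat u c m * (Wᴴ * W) * nMat u c 1) * Wᴴ := by
          simp only [Matrix.mul_assoc]
      _ = W * nMat u c (m+1) * Wᴴ := by rw [hW', Matrix.mul_one, nMat_mul u c hcu]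

lemma fin_cond (a x : Fin d) (m : ℕ) : (a = x + (m : Fin d)) ↔ (x = a - (m : Fin d)) := by
  constructor
  · rintro rfl; simp
  · rintro rfl; simp

lemma nMat_conjTranspose_mul (m : ℕ) :
    (nMat u c m)ᴴ * nMat u c m =
      Matrix.diagonal (fun a => conj (u (a - (m : Fin d)) * c a) * (u (a - (m : Fin d)) * c a)) := by
  ext a b
  simp only [nMat, Matrix.mul_apply, Matrix.conjTranspose_apply, of_apply, fin_cond,
    apply_ite (star : ℂ → ℂ), star_zero, ite_mul, zero_mul,
    Finset.sum_ite_eq' Finset.univ (a - (m : Fin d)), Finset.mem_univ, if_true,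
    Matrix.diagonal_apply]
  have hiff : (a - (m : Fin d) = b - (m : Fin d)) ↔ a = b := sub_left_inj
  rcases eq_or_ne a b with rfl | hne
  · rw [if_pos (hiff.mpr rfl), if_pos rfl]
    rfl
  · rw [if_neg (fun hc => hne (hiff.mp hc)), if_neg hne, mul_zero]

lemma diag_nMat (hd : True) :
    Matrix.diagonal u * nMat (fun _ => (1:ℂ)) (fun _ => (1:ℂ)) 1 * Matrix.diagonal c
      = nMat u c 1 := by
  ext a b
  rw [Matrix.mul_diagonal, Matrix.diagonal_mul]
  simp only [nMat, Matrix.of_apply]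
  split <;> ring


lemma backward_core {d : ℕ} (hd : 0 < d) (A W : Matrix (Fin d) (Fin d) ℂ)
    (t : Fin d → ℝ) (ht : ∀ i, 0 < t i)
    (hW1 : W * Wᴴ = 1) (hW2 : Wᴴ * W = 1)
    (hspec : A = W * Matrix.diagonal (fun i => (t i : ℂ)) * Wᴴ)
    (htr' : ∑ b, ((t b : ℂ))⁻¹ = (d : ℂ)) :
    ∃ T S U : Matrix (Fin d) (Fin d) ℂ, IsUnit S ∧
      U * U.conjTranspose = 1 ∧ U.conjTranspose * U = 1 ∧ T = S * U * S⁻¹ ∧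
      (∃ M : ℝ, ∀ (n : ℕ) (i j : Fin d), ‖(T ^ n) i j‖ ≤ M) ∧
      (∀ i j : Fin d,
        Tendsto (fun n : ℕ =>
          (((n : ℂ)⁻¹ •
            ∑ k ∈ Finset.range n, ((T ^ (k + 1)).conjTranspose * T ^ (k + 1))) i j))
          atTop (𝓝 (A i j))) := by
  classical
  haveI : NeZero d := ⟨hd.ne'⟩
  set c : Fin d → ℂ := fun b => ((Real.sqrt (t b) : ℝ) : ℂ) with hcdef
  set u : Fin d → ℂ := fun b => (((Real.sqrt (t b) : ℝ) : ℂ))⁻¹ with hudef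
  have hsq : ∀ b, c b * c b = (t b : ℂ) := by
    intro b
    rw [hcdef, ← Complex.ofReal_mul, Real.mul_self_sqrt (ht b).le]
  have hc0 : ∀ b, c b ≠ 0 := by
    intro b
    simp only [hcdef, ne_eq, Complex.ofReal_eq_zero]
    exact (Real.sqrt_pos.mpr (ht b)).ne'
  have huc : ∀ b, u b * c b = 1 := fun b => inv_mul_cancel₀ (hc0 b)
  have hcu : ∀ b, c b * u b = 1 := fun b => mul_inv_cancel₀ (hc0 b)
  have husq : ∀ b, u b * u b = ((t b : ℂ))⁻¹ := by
    intro b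
    rw [hudef]
    simp only [← mul_inv]
    exact congrArg Inv.inv (hsq b)
  have hmulWW : ∀ X Y : Matrix (Fin d) (Fin d) ℂ,
      (W * X * Wᴴ) * (W * Y * Wᴴ) = W * (X * Y) * Wᴴ := by
    intro X Y
    calc (W * X * Wᴴ) * (W * Y * Wᴴ) = W * (X * (Wᴴ * W) * Y) * Wᴴ := by
          simp only [Matrix.mul_assoc]
      _ = W * (X * Y) * Wᴴ := by rw [hW2, Matrix.mul_one]
  have hctWW : ∀ X : Matrix (Fin d) (Fin d) ℂ, (W * X * Wᴴ)ᴴ = W * Xᴴ * Wᴴ := by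
    intro X
    simp [Matrix.conjTranspose_mul, Matrix.mul_assoc]
  set Sh : Matrix (Fin d) (Fin d) ℂ := nMat (fun _ => 1) (fun _ => 1) 1 with hShdef
  set S : Matrix (Fin d) (Fin d) ℂ := W * Matrix.diagonal u * Wᴴ with hSdef
  set SR : Matrix (Fin d) (Fin d) ℂ := W * Matrix.diagonal c * Wᴴ with hSRdef
  have hSSR : S * SR = 1 := by
    rw [hSdef, hSRdef, hmulWW, Matrix.diagonal_mul_diagonal]
    have h : (fun b => u b * c b) = fun _ => (1:ℂ) := funext huc
    rw [h, Matrix.diagonal_one, Matrix.mul_one, hW1]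
  have hSRS : SR * S = 1 := by
    rw [hSdef, hSRdef, hmulWW, Matrix.diagonal_mul_diagonal]
    have h : (fun b => c b * u b) = fun _ => (1:ℂ) := funext hcu
    rw [h, Matrix.diagonal_one, Matrix.mul_one, hW1]
  have hSunit : IsUnit S := ⟨⟨S, SR, hSSR, hSRS⟩, rfl⟩
  have hSinv : S⁻¹ = SR := Matrix.inv_eq_right_inv hSSR
  set U : Matrix (Fin d) (Fin d) ℂ := W * Sh * Wᴴ with hUdef
  have hShu : Shᴴ * Sh = 1 := by
    rw [hShdef, nMat_conjTranspose_mul]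
    simp
  have hU2 : Uᴴ * U = 1 := by
    rw [hUdef, hctWW, hmulWW, hShu, Matrix.mul_one, hW1]
  have hU1 : U * Uᴴ = 1 := mul_eq_one_comm.mpr hU2
  set T : Matrix (Fin d) (Fin d) ℂ := S * U * S⁻¹ with hTdef
  have hT1 : T = W * nMat u c 1 * Wᴴ := by
    have e1 : S * U = W * (Matrix.diagonal u * Sh) * Wᴴ := by
      rw [hSdef, hUdef, hmulWW]
    have e2 : (W * (Matrix.diagonal u * Sh) * Wᴴ) * SR
        = W * (Matrix.diagonal u * Sh * Matrix.diagonal c) * Wᴴ := by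
      rw [hSRdef, hmulWW]
    rw [hTdef, hSinv, e1, e2, hShdef, diag_nMat u c trivial]
  have hTpow : ∀ m, T ^ m = W * nMat u c m * Wᴴ :=
    nMat_pow u c huc hcu T W hW1 hW2 hT1
  set bW : ℝ := ∑ p : Fin d × Fin d, ‖W p.1 p.2‖ with hbW
  set bu : ℝ := ∑ a, ‖u a‖ with hbu
  set bc : ℝ := ∑ a, ‖c a‖ with hbc
  have hbW0 : 0 ≤ bW := Finset.sum_nonneg fun _ _ => norm_nonneg _
  have hbu0 : 0 ≤ bu := Finset.sum_nonneg fun _ _ => norm_nonneg _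
  have hbc0 : 0 ≤ bc := Finset.sum_nonneg fun _ _ => norm_nonneg _
  have hWbd : ∀ i x : Fin d, ‖W i x‖ ≤ bW := by
    intro i x
    rw [hbW]
    exact Finset.single_le_sum (f := fun p : Fin d × Fin d => ‖W p.1 p.2‖)
      (fun _ _ => norm_nonneg _) (Finset.mem_univ (i, x))
  have hubd : ∀ x, ‖u x‖ ≤ bu := by
    intro x
    rw [hbu]
    exact Finset.single_le_sum (fun _ _ => norm_nonneg _) (Finset.mem_univ x)
  have hcbd : ∀ x, ‖c x‖ ≤ bc := by
    intro x
    rw [hbc]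
    exact Finset.single_le_sum (fun _ _ => norm_nonneg _) (Finset.mem_univ x)
  have hNbd : ∀ (m : ℕ) (x b : Fin d), ‖nMat u c m x b‖ ≤ bu * bc := by
    intro m x b
    simp only [nMat, Matrix.of_apply]
    split
    · rw [norm_mul]
      exact mul_le_mul (hubd x) (hcbd b) (norm_nonneg _) hbu0
    · simpa using mul_nonneg hbu0 hbc0
  have hMbd : ∀ (n : ℕ) (i j : Fin d),
      ‖(T ^ n) i j‖ ≤ (d * d) * (bW * (bu * bc) * bW) := by
    intro n i j
    have hentry : (T ^ n) i j = ∑ b, ∑ x, W i x * nMat u c n x b * star (W j b) := by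
      rw [hTpow n]
      simp only [Matrix.mul_apply, Matrix.conjTranspose_apply, Finset.sum_mul]
    rw [hentry]
    calc ‖∑ b, ∑ x, W i x * nMat u c n x b * star (W j b)‖
        ≤ ∑ b, ‖∑ x, W i x * nMat u c n x b * star (W j b)‖ :=
          norm_sum_le _ _
      _ ≤ ∑ _b : Fin d, ∑ _x : Fin d, (bW * (bu * bc) * bW) := by
          apply Finset.sum_le_sum
          intro b _
          calc ‖∑ x, W i x * nMat u c n x b * star (W j b)‖
              ≤ ∑ x, ‖W i x * nMat u c n x b * star (W j b)‖ :=
                norm_sum_le _ _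
            _ ≤ ∑ _x : Fin d, (bW * (bu * bc) * bW) := by
                apply Finset.sum_le_sum
                intro x _
                rw [norm_mul, norm_mul]
                have habsstar : ‖star (W j b)‖ = ‖W j b‖ :=
                  norm_star _
                rw [habsstar]
                have h1 : ‖W i x‖ * ‖nMat u c n x b‖
                    ≤ bW * (bu * bc) :=
                  mul_le_mul (hWbd i x) (hNbd n x b) (norm_nonneg _) hbW0
                exact mul_le_mul h1 (hWbd j b) (norm_nonneg _) (mul_nonneg hbW0 (mul_nonneg hbu0 hbc0))
      _ = (d * d) * (bW * (bu * bc) * bW) := by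
          simp [Finset.sum_const, nsmul_eq_mul]
          ring
  set w : ℕ → Fin d → ℂ := fun m a =>
    conj (u (a - (m : Fin d)) * c a) * (u (a - (m : Fin d)) * c a) with hwdef
  have hwval : ∀ (m : ℕ) (a : Fin d),
      w m a = (t a : ℂ) * ((t (a - (m : Fin d)) : ℂ))⁻¹ := by
    intro m a
    rw [hwdef]
    simp only [_root_.map_mul, hudef, hcdef, map_inv₀, Complex.conj_ofReal]
    have h1 := hsq a
    have h2 := husq (a - (m : Fin d))
    rw [hcdef] at h1
    rw [hudef] at h2
    calc ((Real.sqrt (t (a - (m:Fin d))) : ℂ))⁻¹ * (Real.sqrt (t a) : ℂ) *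
          (((Real.sqrt (t (a - (m:Fin d))) : ℂ))⁻¹ * (Real.sqrt (t a) : ℂ))
        = ((Real.sqrt (t a) : ℂ) * (Real.sqrt (t a) : ℂ)) *
          (((Real.sqrt (t (a - (m:Fin d))) : ℂ))⁻¹ *
            ((Real.sqrt (t (a - (m:Fin d))) : ℂ))⁻¹) := by ring
      _ = (t a : ℂ) * ((t (a - (m : Fin d)) : ℂ))⁻¹ := by rw [h1, h2]
  have hCk : ∀ k : ℕ, (T ^ (k+1))ᴴ * T ^ (k+1) = W * Matrix.diagonal (w (k+1)) * Wᴴ := by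
    intro k
    rw [hTpow (k+1), hctWW, hmulWW, nMat_conjTranspose_mul]
  have hEnt : ∀ (f : Fin d → ℂ) (i j : Fin d),
      (W * Matrix.diagonal f * Wᴴ) i j = ∑ a, W i a * star (W j a) * f a := by
    intro f i j
    rw [Matrix.mul_apply]
    apply Finset.sum_congr rfl
    intro a _
    rw [Matrix.mul_diagonal, Matrix.conjTranspose_apply]
    ring
  have hscalar : ∀ a : Fin d,
      Tendsto (fun n : ℕ => (n:ℂ)⁻¹ * ∑ k ∈ Finset.range n, w (k+1) a) atTop
        (𝓝 ((t a : ℂ))) := by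
    intro a
    have hp : ∀ k : ℕ, w (k + d + 1) a = w (k + 1) a := by
      intro k
      rw [hwval, hwval]
      congr 3
      push_cast [Fin.natCast_self]
      rw [add_zero]
    have hmean : ∑ k ∈ Finset.range d, w (k+1) a = (t a : ℂ) * d := by
      have h1 : ∀ k, w (k+1) a = (t a : ℂ) * ((t (a - ((k+1 : ℕ) : Fin d)) : ℂ))⁻¹ :=
        fun k => hwval (k+1) a
      simp only [h1, ← Finset.mul_sum]
      congr 1
      have h2 : ∑ k ∈ Finset.range d, ((t (a - ((k+1 : ℕ) : Fin d)) : ℂ))⁻¹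
          = ∑ i : Fin d, ((t (a - (i + 1)) : ℂ))⁻¹ := by
        rw [← Fin.sum_univ_eq_sum_range (fun k => ((t (a - ((k+1 : ℕ) : Fin d)) : ℂ))⁻¹) d]
        apply Finset.sum_congr rfl
        intro i _
        congr 2
        push_cast [Fin.cast_val_eq_self]
        ring
      rw [h2, ← htr']
      apply Fintype.sum_bijective (fun i : Fin d => a - (i + 1))
      · apply Finite.injective_iff_bijective.mp
        intro i j hij
        have h3 := sub_right_inj.mp hij
        exact add_left_injective 1 h3
      · intro i
        rfl
    have hlim := cesaro_periodic hd (fun k => w (k+1) a) (fun k => hp k)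
    rw [hmean] at hlim
    have heq : (t a : ℂ) * (d : ℂ) / (d : ℂ) = (t a : ℂ) := by
      rw [mul_div_assoc, div_self (Nat.cast_ne_zero.mpr hd.ne'), mul_one]
    rwa [heq] at hlim
  have hCes : ∀ i j : Fin d,
      Tendsto (fun n : ℕ =>
        (((n : ℂ)⁻¹ •
          ∑ k ∈ Finset.range n, ((T ^ (k + 1)).conjTranspose * T ^ (k + 1))) i j))
        atTop (𝓝 (A i j)) := by
    intro i j
    have hform : ∀ n : ℕ,
        (((n : ℂ)⁻¹ • ∑ k ∈ Finset.range n, ((T ^ (k + 1)).conjTranspose * T ^ (k + 1))) i j)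
        = ∑ a, W i a * star (W j a) * ((n:ℂ)⁻¹ * ∑ k ∈ Finset.range n, w (k+1) a) := by
      intro n
      have h1 : ∑ k ∈ Finset.range n, ((T ^ (k + 1)).conjTranspose * T ^ (k + 1))
          = ∑ k ∈ Finset.range n, W * Matrix.diagonal (w (k+1)) * Wᴴ :=
        Finset.sum_congr rfl fun k _ => hCk k
      calc (((n : ℂ)⁻¹ • ∑ k ∈ Finset.range n, ((T ^ (k + 1)).conjTranspose * T ^ (k + 1))) i j)
          = (n:ℂ)⁻¹ * ∑ k ∈ Finset.range n, ∑ a, (W i a * star (W j a) * w (k+1) a) := by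
            rw [h1, Matrix.smul_apply, Matrix.sum_apply, smul_eq_mul]
            exact congrArg _ (Finset.sum_congr rfl fun k _ => hEnt _ i j)
        _ = (n:ℂ)⁻¹ * ∑ a, ∑ k ∈ Finset.range n, (W i a * star (W j a) * w (k+1) a) := by
            rw [Finset.sum_comm]
        _ = ∑ a, W i a * star (W j a) * ((n:ℂ)⁻¹ * ∑ k ∈ Finset.range n, w (k+1) a) := by
            rw [Finset.mul_sum]
            apply Finset.sum_congr rfl
            intro a _
            rw [← Finset.mul_sum]
            ring
    simp only [hform]
    have hlim2 : Tendsto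
        (fun n : ℕ => ∑ a, W i a * star (W j a) * ((n:ℂ)⁻¹ * ∑ k ∈ Finset.range n, w (k+1) a))
        atTop (𝓝 (∑ a, W i a * star (W j a) * (t a : ℂ))) := by
      apply tendsto_finset_sum
      intro a _
      exact (hscalar a).const_mul _
    have hAij : A i j = ∑ a, W i a * star (W j a) * (t a : ℂ) := by
      conv_lhs => rw [hspec]
      exact hEnt _ i j
    rw [hAij]
    exact hlim2
  exact ⟨T, S, U, hSunit, hU1, hU2, rfl, ⟨(d * d) * (bW * (bu * bc) * bW), hMbd⟩, hCes⟩

lemma backward_dir {d : ℕ} (hd : 0 < d) (A : Matrix (Fin d) (Fin d) ℂ) (hA : A.PosDef)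
    (htr : Matrix.trace A⁻¹ = (d : ℂ)) :
    ∃ T S U : Matrix (Fin d) (Fin d) ℂ, IsUnit S ∧
      U * U.conjTranspose = 1 ∧ U.conjTranspose * U = 1 ∧ T = S * U * S⁻¹ ∧
      (∃ M : ℝ, ∀ (n : ℕ) (i j : Fin d), ‖(T ^ n) i j‖ ≤ M) ∧
      (∀ i j : Fin d,
        Tendsto (fun n : ℕ =>
          (((n : ℂ)⁻¹ •
            ∑ k ∈ Finset.range n, ((T ^ (k + 1)).conjTranspose * T ^ (k + 1))) i j))
          atTop (𝓝 (A i j))) := by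
  classical
  have hH : A.IsHermitian := hA.1
  set W : Matrix (Fin d) (Fin d) ℂ :=
    (Matrix.IsHermitian.eigenvectorUnitary hH : Matrix (Fin d) (Fin d) ℂ) with hWdef
  set t : Fin d → ℝ := hH.eigenvalues with htdef
  have ht : ∀ i, 0 < t i := hA.eigenvalues_pos
  have hW1 : W * Wᴴ = 1 := by
    have h := (Matrix.mem_unitaryGroup_iff).mp (Matrix.IsHermitian.eigenvectorUnitary hH).2
    rwa [Matrix.star_eq_conjTranspose] at h
  have hW2 : Wᴴ * W = 1 := by
    have h := (Matrix.mem_unitaryGroup_iff').mp (Matrix.IsHermitian.eigenvectorUnitary hH).2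
    rwa [Matrix.star_eq_conjTranspose] at h
  have hspec : A = W * Matrix.diagonal (fun i => (t i : ℂ)) * Wᴴ := by
    have h := hH.spectral_theorem
    rw [Unitary.conjStarAlgAut_apply] at h
    exact h
  have hmulWW : ∀ X Y : Matrix (Fin d) (Fin d) ℂ,
      (W * X * Wᴴ) * (W * Y * Wᴴ) = W * (X * Y) * Wᴴ := by
    intro X Y
    calc (W * X * Wᴴ) * (W * Y * Wᴴ) = W * (X * (Wᴴ * W) * Y) * Wᴴ := by
          simp only [Matrix.mul_assoc]
      _ = W * (X * Y) * Wᴴ := by rw [hW2, Matrix.mul_one]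
  have hAinv : A⁻¹ = W * Matrix.diagonal (fun b => ((t b : ℂ))⁻¹) * Wᴴ := by
    apply Matrix.inv_eq_right_inv
    rw [hspec, hmulWW, Matrix.diagonal_mul_diagonal]
    have h : (fun b => (t b : ℂ) * ((t b : ℂ))⁻¹) = fun _ => (1:ℂ) := by
      funext b
      exact mul_inv_cancel₀ (Complex.ofReal_ne_zero.mpr (ht b).ne')
    rw [h, Matrix.diagonal_one, Matrix.mul_one, hW1]
  have htr' : ∑ b, ((t b : ℂ))⁻¹ = (d : ℂ) := by
    have h1 : Matrix.trace A⁻¹ = ∑ b, ((t b : ℂ))⁻¹ := by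
      rw [hAinv, Matrix.trace_mul_cycle, hW2, Matrix.one_mul, Matrix.trace_diagonal]
    rw [← h1, htr]
  exact backward_core hd A W t ht hW1 hW2 hspec htr'


lemma forward_dir {d : ℕ} (hd : 0 < d) (A : Matrix (Fin d) (Fin d) ℂ) (hA : A.PosDef)
    (T S U : Matrix (Fin d) (Fin d) ℂ) (hS : IsUnit S)
    (hU1 : U * U.conjTranspose = 1) (hU2 : U.conjTranspose * U = 1)
    (hT : T = S * U * S⁻¹)
    (M : ℝ) (hM : ∀ (n : ℕ) (i j : Fin d), ‖(T ^ n) i j‖ ≤ M)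
    (hlim : ∀ i j : Fin d,
      Tendsto (fun n : ℕ =>
        (((n : ℂ)⁻¹ •
          ∑ k ∈ Finset.range n, ((T ^ (k + 1)).conjTranspose * T ^ (k + 1))) i j))
        atTop (𝓝 (A i j))) :
    Matrix.trace A⁻¹ = (d : ℂ) := by
  classical
  have hAdet : IsUnit A.det := isUnit_iff_ne_zero.mpr (ne_of_gt hA.det_pos)
  have hTunit : IsUnit T := by
    rw [hT]
    have hUunit : IsUnit U := ⟨⟨U, Uᴴ, hU1, hU2⟩, rfl⟩
    have hSdet : IsUnit S.det := (Matrix.isUnit_iff_isUnit_det S).mp hS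
    have hSinv : IsUnit S⁻¹ :=
      ⟨⟨S⁻¹, S, Matrix.nonsing_inv_mul S hSdet, Matrix.mul_nonsing_inv S hSdet⟩, rfl⟩
    exact (hS.mul hUunit).mul hSinv
  have hTdet : IsUnit T.det := (Matrix.isUnit_iff_isUnit_det T).mp hTunit
  have hTHdet : IsUnit Tᴴ.det := by
    rw [Matrix.det_conjTranspose]; exact hTdet.star
  -- notation
  set B : ℕ → Matrix (Fin d) (Fin d) ℂ := fun n =>
    (n : ℂ)⁻¹ • ∑ k ∈ Finset.range n, ((T ^ (k + 1)).conjTranspose * T ^ (k + 1)) with hB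
  set C : ℕ → Matrix (Fin d) (Fin d) ℂ := fun k => (T ^ (k + 1))ᴴ * T ^ (k + 1) with hC
  -- Step: T^* A T = A
  have hshift : ∀ n : ℕ, Tᴴ * B n * T = B n + (n : ℂ)⁻¹ • (C n - C 0) := by
    intro n
    have h1 : Tᴴ * B n * T = (n : ℂ)⁻¹ • ∑ k ∈ Finset.range n, (Tᴴ * C k * T) := by
      simp only [hB, hC, Matrix.mul_smul, Matrix.smul_mul, Finset.mul_sum, Finset.sum_mul]
    have h2 : ∀ k, Tᴴ * C k * T = C (k + 1) := by
      intro k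
      simp only [hC]
      calc Tᴴ * ((T ^ (k+1))ᴴ * T ^ (k+1)) * T
          = (T ^ (k+1) * T)ᴴ * (T ^ (k+1) * T) := by
            rw [Matrix.conjTranspose_mul]; simp only [Matrix.mul_assoc]
        _ = (T ^ (k+2))ᴴ * T ^ (k+2) := by rw [← pow_succ]
    have h3 : ∑ k ∈ Finset.range n, C (k + 1) = (∑ k ∈ Finset.range n, C k) + C n - C 0 := by
      have e1 : ∑ k ∈ Finset.range (n+1), C k = (∑ k ∈ Finset.range n, C k) + C n :=
        Finset.sum_range_succ _ _
      have e2 : ∑ k ∈ Finset.range (n+1), C k = (∑ k ∈ Finset.range n, C (k+1)) + C 0 :=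
        Finset.sum_range_succ' _ _
      exact eq_sub_iff_add_eq.mpr (e1.symm.trans e2).symm
    rw [h1, funext h2, h3]
    simp only [hB, smul_add, smul_sub]
    abel
  have hCbdd : ∀ n i j, ‖C n i j‖ ≤ d * (M * M) := by
    intro n i j
    have : C n i j = ∑ a, conj ((T ^ (n+1)) a i) * (T ^ (n+1)) a j := by
      simp only [hC, Matrix.mul_apply, Matrix.conjTranspose_apply]
      rfl
    rw [this]
    calc ‖∑ a, conj ((T ^ (n+1)) a i) * (T ^ (n+1)) a j‖
        ≤ ∑ a, ‖conj ((T ^ (n+1)) a i) * (T ^ (n+1)) a j‖ :=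
          norm_sum_le _ _
      _ ≤ ∑ _a : Fin d, M * M := by
          apply Finset.sum_le_sum
          intro a _
          rw [norm_mul, Complex.norm_conj]
          have h1 := hM (n+1) a i
          have h2 := hM (n+1) a j
          have h0 : (0:ℝ) ≤ M := le_trans (norm_nonneg _) h1
          exact mul_le_mul h1 h2 (norm_nonneg _) h0
      _ = d * (M * M) := by simp [Finset.sum_const, nsmul_eq_mul]
  have hATA : Tᴴ * A * T = A := by
    ext i j
    have hL : Tendsto (fun n => (Tᴴ * B n * T) i j) atTop (𝓝 ((Tᴴ * A * T) i j)) := by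
      have hrepr : ∀ (X : Matrix (Fin d) (Fin d) ℂ),
          (Tᴴ * X * T) i j = ∑ b, ∑ a, star (T a i) * X a b * T b j := by
        intro X
        simp only [Matrix.mul_apply, Matrix.conjTranspose_apply, Finset.sum_mul]
      simp only [hrepr]
      apply tendsto_finset_sum
      intro b _
      apply tendsto_finset_sum
      intro a _
      exact (Tendsto.mul_const _ ((hlim a b).const_mul _))
    have hR : Tendsto (fun n => (Tᴴ * B n * T) i j) atTop (𝓝 (A i j)) := by
      have hRe : ∀ n, (Tᴴ * B n * T) i j = B n i j + (n:ℂ)⁻¹ * ((C n - C 0) i j) := by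
        intro n
        rw [hshift n]
        simp [Matrix.add_apply, Matrix.smul_apply, smul_eq_mul]
      simp only [hRe]
      have hz : Tendsto (fun n : ℕ => (n:ℂ)⁻¹ * ((C n - C 0) i j)) atTop (𝓝 0) := by
        have hbd : ∀ n : ℕ, ‖(n:ℂ)⁻¹ * ((C n - C 0) i j)‖ ≤ (d * (M*M) + d * (M*M)) / n := by
          intro n
          rcases Nat.eq_zero_or_pos n with rfl | hn
          · simp
          · rw [norm_mul]
            have h1 : ‖(n:ℂ)⁻¹‖ = (n:ℝ)⁻¹ := by simp
            have h2 : ‖(C n - C 0) i j‖ ≤ d * (M*M) + d * (M*M) := by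
              have : (C n - C 0) i j = C n i j - C 0 i j := by simp [Matrix.sub_apply]
              rw [this]
              calc ‖C n i j - C 0 i j‖ ≤ ‖C n i j‖ + ‖C 0 i j‖ := norm_sub_le _ _
                _ ≤ d * (M*M) + d * (M*M) := add_le_add (hCbdd n i j) (hCbdd 0 i j)
            rw [h1, div_eq_inv_mul]
            exact mul_le_mul_of_nonneg_left h2 (inv_nonneg.2 (Nat.cast_nonneg n))
        exact squeeze_zero_norm hbd (tendsto_const_div_atTop_nhds_zero_nat _)
      have := (hlim i j).add hz
      rwa [add_zero] at this
    exact tendsto_nhds_unique hL hR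
  -- Step: T A⁻¹ T^* = A⁻¹
  have hTAinv : T * A⁻¹ * Tᴴ = A⁻¹ := by
    have h1 : A⁻¹ = T⁻¹ * A⁻¹ * (Tᴴ)⁻¹ := by
      conv_lhs => rw [← hATA]
      rw [Matrix.mul_inv_rev, Matrix.mul_inv_rev]
      simp only [Matrix.mul_assoc]
    calc T * A⁻¹ * Tᴴ = T * (T⁻¹ * A⁻¹ * (Tᴴ)⁻¹) * Tᴴ := by rw [← h1]
      _ = (T * T⁻¹) * A⁻¹ * ((Tᴴ)⁻¹ * Tᴴ) := by simp only [Matrix.mul_assoc]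
      _ = A⁻¹ := by
          rw [Matrix.mul_nonsing_inv T hTdet, Matrix.nonsing_inv_mul Tᴴ hTHdet]
          simp
  have hpow : ∀ k : ℕ, T ^ k * A⁻¹ * (T ^ k)ᴴ = A⁻¹ := by
    intro k
    induction k with
    | zero => simp
    | succ k ih =>
      rw [pow_succ, Matrix.conjTranspose_mul]
      calc T ^ k * T * A⁻¹ * (Tᴴ * (T ^ k)ᴴ)
          = T ^ k * (T * A⁻¹ * Tᴴ) * (T ^ k)ᴴ := by simp only [Matrix.mul_assoc]
        _ = A⁻¹ := by rw [hTAinv, ih]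
  -- trace identities
  have htraceC : ∀ k, Matrix.trace (A⁻¹ * C k) = Matrix.trace A⁻¹ := by
    intro k
    have : Matrix.trace (A⁻¹ * ((T ^ (k+1))ᴴ * T ^ (k+1)))
        = Matrix.trace (T ^ (k+1) * A⁻¹ * (T ^ (k+1))ᴴ) := by
      rw [← Matrix.mul_assoc, Matrix.trace_mul_cycle]
    simp only [hC]
    rw [this, hpow]
  have htraceB : ∀ n : ℕ, 1 ≤ n → Matrix.trace (A⁻¹ * B n) = Matrix.trace A⁻¹ := by
    intro n hn
    have : A⁻¹ * B n = (n:ℂ)⁻¹ • ∑ k ∈ Finset.range n, (A⁻¹ * C k) := by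
      simp only [hB, hC, Matrix.mul_smul, Finset.mul_sum]
    rw [this, Matrix.trace_smul, Matrix.trace_sum]
    simp only [htraceC]
    rw [Finset.sum_const, Finset.card_range, nsmul_eq_mul, smul_eq_mul, ← mul_assoc,
      inv_mul_cancel₀ (Nat.cast_ne_zero.mpr (by omega) : (n:ℂ) ≠ 0), one_mul]
  have hlimtrace : Tendsto (fun n => Matrix.trace (A⁻¹ * B n)) atTop
      (𝓝 (Matrix.trace (A⁻¹ * A))) := by
    have hrepr : ∀ (X : Matrix (Fin d) (Fin d) ℂ),
        Matrix.trace (A⁻¹ * X) = ∑ i, ∑ a, A⁻¹ i a * X a i := by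
      intro X
      simp [Matrix.trace, Matrix.diag, Matrix.mul_apply]
    simp only [hrepr]
    apply tendsto_finset_sum
    intro i _
    apply tendsto_finset_sum
    intro a _
    exact (hlim a i).const_mul _
  have hconst : Tendsto (fun n => Matrix.trace (A⁻¹ * B n)) atTop (𝓝 (Matrix.trace A⁻¹)) := by
    apply Tendsto.congr' _ (tendsto_const_nhds (x := Matrix.trace A⁻¹))
    filter_upwards [eventually_ge_atTop 1] with n hn
    exact (htraceB n hn).symm
  have hfinal := tendsto_nhds_unique hconst hlimtrace
  rw [Matrix.nonsing_inv_mul A hAdet, Matrix.trace_one] at hfinal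
  simpa using hfinal

/-- A positive definite matrix `A ∈ B(ℂ^d)` is the Cesàro asymptotic limit of a
power bounded matrix of class `C₁₁` (i.e. one similar to a unitary matrix)
if and only if `tr (A⁻¹) = d` (equivalently, the reciprocals of the eigenvalues
of `A` sum to `d`). -/
theorem stmt12 {d : ℕ} (A : Matrix (Fin d) (Fin d) ℂ) (hA : A.PosDef) :
    (∃ T S U : Matrix (Fin d) (Fin d) ℂ, IsUnit S ∧
      U * U.conjTranspose = 1 ∧ U.conjTranspose * U = 1 ∧ T = S * U * S⁻¹ ∧
      (∃ M : ℝ, ∀ (n : ℕ) (i j : Fin d), ‖(T ^ n) i j‖ ≤ M) ∧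
      (∀ i j : Fin d,
        Tendsto (fun n : ℕ =>
          (((n : ℂ)⁻¹ •
            ∑ k ∈ Finset.range n, ((T ^ (k + 1)).conjTranspose * T ^ (k + 1))) i j))
          atTop (𝓝 (A i j)))) ↔
    Matrix.trace A⁻¹ = (d : ℂ) := by
  rcases Nat.eq_zero_or_pos d with hd | hd
  · subst hd
    constructor
    · intro _
      simp [Matrix.trace]
    · intro _
      refine ⟨1, 1, 1, isUnit_one, by simp, by simp, by simp, ⟨1, ?_⟩, ?_⟩
      · intro n i j
        exact i.elim0
      · intro i j
        exact i.elim0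
  · constructor
    · rintro ⟨T, S, U, hS, hU1, hU2, hT, ⟨M, hM⟩, hlim⟩
      exact forward_dir hd A hA T S U hS hU1 hU2 hT M hM hlim
    · intro htr
      exact backward_dir hd A hA htr
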